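/- Let θ ∈ (0,1). Then ∫₀^∞ t^{2θ−3} · K(t)² dt ≤ 2 Σₙ λₙ ∫₀^∞ t^{2θ−3} · Kₙ(t)² dt, where for t > 0, K(t) is the infimum over all pairs of sequences v₀ : ℕ → E, v₁ : ℕ → F with v₀ₙ + v₁ₙ = bₙ for every n of the quantity (Σₙ λₙ ‖v₀ₙ‖_E²)^{1/2} + t (Σₙ λₙ ‖v₁ₙ‖_F²)^{1/2}, and Kₙ(t) is the infimum over all v₀ ∈ E, v₁ ∈ F with v₀ + v₁ = bₙ of ‖v₀‖_E + t ‖v₁‖_F. (All infima, sums and integrals are taken in the extended nonnegative reals [0,∞], with the infimum over the empty set equal to ∞; the integrals are Lebesgue integrals over (0,∞).) -/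

import Mathlib

open scoped ENNReal NNReal

lemma aux_amgm (x y : ℝ≥0∞) : 2*x*y ≤ x^2 + y^2 := by
  rcases eq_or_ne x 0 with rfl|hx0; · simp
  rcases eq_or_ne y 0 with rfl|hy0; · simp
  rcases eq_or_ne x ⊤ with rfl|hxt
  · simp [ENNReal.top_mul, hy0, ENNReal.top_pow]
  rcases eq_or_ne y ⊤ with rfl|hyt
  · simp [ENNReal.mul_top, ENNReal.top_pow]
  lift x to ℝ≥0 using hxt
  lift y to ℝ≥0 using hyt
  rw [← ENNReal.coe_ofNat, ← ENNReal.coe_mul, ← ENNReal.coe_mul, ← ENNReal.coe_pow,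
    ← ENNReal.coe_pow, ← ENNReal.coe_add, ENNReal.coe_le_coe, ← NNReal.coe_le_coe]
  push_cast
  nlinarith [sq_nonneg ((x:ℝ) - y)]

lemma aux_sq_add_le_two (x y : ℝ≥0∞) : (x+y)^2 ≤ 2*(x^2+y^2) := by
  have := aux_amgm x y
  calc (x+y)^2 = x^2 + 2*x*y + y^2 := by ring
    _ ≤ x^2 + (x^2+y^2) + y^2 := by gcongr
    _ = 2*(x^2+y^2) := by ring

lemma aux_sqrt_sq (A : ℝ≥0∞) : (A ^ (1/2:ℝ))^2 = A := by
  rw [← ENNReal.rpow_natCast (A ^ (1/2:ℝ)) 2, ← ENNReal.rpow_mul]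
  norm_num

lemma aux_approx {E F : Type*} [NormedAddCommGroup E] [Module ℝ E]
    [NormedAddCommGroup F] [Module ℝ F] (ι : F →ₗ[ℝ] E)
    (cn : ℝ≥0∞) (hc : cn ≠ ⊤) (bn : E) (T : ℝ≥0∞)
    (K : ℝ≥0∞) (hK : K = ⨅ (v₀ : E) (v₁ : F) (_ : v₀ + ι v₁ = bn), ((‖v₀‖₊:ℝ≥0∞) + T * ‖v₁‖₊))
    (hKlt : K < ⊤) (e : ℝ≥0∞) (he : 0 < e) :
    ∃ (v₀ : E) (v₁ : F), v₀ + ι v₁ = bn ∧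
      cn * ((‖v₀‖₊:ℝ≥0∞) + T * ‖v₁‖₊)^2 ≤ cn * K^2 + e := by
  rcases eq_or_ne cn 0 with rfl|hc0
  · exact ⟨bn, 0, by simp, by simp⟩
  set M : ℝ≥0∞ := cn * (2*K + 1) with hM
  have hM0 : M ≠ 0 := by
    simp [hM, hc0, mul_eq_zero]
  have hMt : M ≠ ⊤ := by
    simp [hM, ENNReal.mul_eq_top, hc, ENNReal.add_eq_top, hKlt.ne]
  set δ : ℝ≥0∞ := min 1 (e / M) with hδ
  have hδ0 : 0 < δ := lt_min one_pos (ENNReal.div_pos he.ne' hMt)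
  have hδ1 : δ ≤ 1 := min_le_left _ _
  have hMδ : M * δ ≤ e := by
    calc M * δ ≤ M * (e / M) := by gcongr; exact min_le_right _ _
      _ = e := ENNReal.mul_div_cancel hM0 hMt
  have hlt : (⨅ (v₀ : E) (v₁ : F) (_ : v₀ + ι v₁ = bn), ((‖v₀‖₊:ℝ≥0∞) + T * ‖v₁‖₊)) < K + δ := by
    rw [← hK]; exact ENNReal.lt_add_right hKlt.ne hδ0.ne'
  simp only [iInf_lt_iff] at hlt
  obtain ⟨v₀, v₁, hsum, hv⟩ := hlt
  refine ⟨v₀, v₁, hsum, ?_⟩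
  calc cn * ((‖v₀‖₊:ℝ≥0∞) + T * ‖v₁‖₊)^2
      ≤ cn * (K + δ)^2 := mul_le_mul_right (pow_le_pow_left' hv.le 2) cn
    _ = cn * K^2 + cn * (2*K*δ + δ*δ) := by ring
    _ ≤ cn * K^2 + cn * (2*K*δ + 1*δ) := by gcongr
    _ = cn * K^2 + M * δ := by rw [hM]; ring
    _ ≤ cn * K^2 + e := by gcongr

lemma aux_pointwise {E F : Type*} [NormedAddCommGroup E] [Module ℝ E]
    [NormedAddCommGroup F] [Module ℝ F] (ι : F →ₗ[ℝ] E)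
    (c : ℕ → ℝ≥0∞) (hc : ∀ n, c n ≠ ⊤) (b : ℕ → E) (T : ℝ≥0∞) (hT : T ≠ ⊤) :
    (⨅ (v₀ : ℕ → E) (v₁ : ℕ → F) (_ : ∀ n, v₀ n + ι (v₁ n) = b n),
       ((∑' n, c n * (‖v₀ n‖₊ : ℝ≥0∞)^2)^(1/2:ℝ) +
         T * (∑' n, c n * (‖v₁ n‖₊:ℝ≥0∞)^2)^(1/2:ℝ)))^2
    ≤ 2 * ∑' n, c n *
        (⨅ (v₀ : E) (v₁ : F) (_ : v₀ + ι v₁ = b n), ((‖v₀‖₊:ℝ≥0∞) + T * ‖v₁‖₊))^2 := by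
  set Kn : ℕ → ℝ≥0∞ :=
    fun n => ⨅ (v₀ : E) (v₁ : F) (_ : v₀ + ι v₁ = b n), ((‖v₀‖₊:ℝ≥0∞) + T * ‖v₁‖₊) with hKn
  have hKnlt : ∀ n, Kn n < ⊤ := by
    intro n
    have h1 : Kn n ≤ (‖b n‖₊ : ℝ≥0∞) + T * ‖(0:F)‖₊ :=
      iInf_le_of_le (b n) (iInf_le_of_le 0 (iInf_le _ (by simp)))
    refine lt_of_le_of_lt h1 ?_
    simp [lt_top_iff_ne_top, ENNReal.mul_eq_top, hT]
  set S : ℝ≥0∞ := ∑' n, c n * Kn n ^ 2 with hS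
  rcases eq_or_ne S ⊤ with hStop|hSne
  · rw [hStop]
    simp [ENNReal.mul_top]
  refine ENNReal.le_of_forall_pos_le_add fun ε hε h2S => ?_
  set εn : ℕ → ℝ≥0∞ := fun n => (ε:ℝ≥0∞)/2 * 2⁻¹^(n+1) with hεn
  have hεnsum : ∑' n, εn n = (ε:ℝ≥0∞)/2 := by
    rw [hεn, ENNReal.tsum_mul_left]
    have h1 : ∑' (n:ℕ), (2⁻¹:ℝ≥0∞)^(n+1) = 1 := by
      simp only [pow_succ']
      rw [ENNReal.tsum_mul_left, ENNReal.tsum_geometric, ENNReal.one_sub_inv_two]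
      simp [ENNReal.inv_mul_cancel]
    rw [h1, mul_one]
  have hεn0 : ∀ n, 0 < εn n := by
    intro n
    rw [hεn]
    refine ENNReal.mul_pos ?_ (by simp)
    simp [ENNReal.div_eq_zero_iff, ENNReal.coe_eq_zero, hε.ne']
  have hex : ∀ n, ∃ (v₀ : E) (v₁ : F), v₀ + ι v₁ = b n ∧
      c n * ((‖v₀‖₊:ℝ≥0∞) + T * ‖v₁‖₊)^2 ≤ c n * Kn n^2 + εn n :=
    fun n => aux_approx ι (c n) (hc n) (b n) T (Kn n) rfl (hKnlt n) (εn n) (hεn0 n)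
  choose v₀ v₁ hsum hbound using hex
  set A : ℝ≥0∞ := ∑' n, c n * (‖v₀ n‖₊ : ℝ≥0∞)^2 with hA
  set B : ℝ≥0∞ := ∑' n, c n * (‖v₁ n‖₊ : ℝ≥0∞)^2 with hB
  have hKle : (⨅ (v₀ : ℕ → E) (v₁ : ℕ → F) (_ : ∀ n, v₀ n + ι (v₁ n) = b n),
       ((∑' n, c n * (‖v₀ n‖₊ : ℝ≥0∞)^2)^(1/2:ℝ) +
         T * (∑' n, c n * (‖v₁ n‖₊:ℝ≥0∞)^2)^(1/2:ℝ)))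
      ≤ A^(1/2:ℝ) + T * B^(1/2:ℝ) :=
    iInf_le_of_le v₀ (iInf_le_of_le v₁ (iInf_le _ hsum))
  calc (⨅ (v₀ : ℕ → E) (v₁ : ℕ → F) (_ : ∀ n, v₀ n + ι (v₁ n) = b n),
       ((∑' n, c n * (‖v₀ n‖₊ : ℝ≥0∞)^2)^(1/2:ℝ) +
         T * (∑' n, c n * (‖v₁ n‖₊:ℝ≥0∞)^2)^(1/2:ℝ)))^2
      ≤ (A^(1/2:ℝ) + T * B^(1/2:ℝ))^2 := pow_le_pow_left' hKle 2
    _ ≤ 2 * ((A^(1/2:ℝ))^2 + (T * B^(1/2:ℝ))^2) := aux_sq_add_le_two _ _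
    _ = 2 * (A + T^2 * B) := by rw [mul_pow, aux_sqrt_sq, aux_sqrt_sq]
    _ = 2 * ∑' n, (c n * (‖v₀ n‖₊:ℝ≥0∞)^2 + T^2 * (c n * (‖v₁ n‖₊:ℝ≥0∞)^2)) := by
        rw [ENNReal.tsum_add, ENNReal.tsum_mul_left]
    _ ≤ 2 * ∑' n, c n * ((‖v₀ n‖₊:ℝ≥0∞) + T * ‖v₁ n‖₊)^2 := by
        gcongr 2 * ?_
        refine ENNReal.tsum_le_tsum fun n => ?_
        calc c n * (‖v₀ n‖₊:ℝ≥0∞)^2 + T^2 * (c n * (‖v₁ n‖₊:ℝ≥0∞)^2)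
            = c n * ((‖v₀ n‖₊:ℝ≥0∞)^2 + (T * ‖v₁ n‖₊)^2) := by ring
          _ ≤ c n * ((‖v₀ n‖₊:ℝ≥0∞) + T * ‖v₁ n‖₊)^2 := by
              gcongr
              rw [add_sq]
              calc (‖v₀ n‖₊:ℝ≥0∞)^2 + (T * ‖v₁ n‖₊)^2
                  ≤ ((‖v₀ n‖₊:ℝ≥0∞)^2 + 2*‖v₀ n‖₊*(T*‖v₁ n‖₊)) + (T * ‖v₁ n‖₊)^2 := by
                    gcongr; exact le_self_add
                _ = _ := by ring
    _ ≤ 2 * ∑' n, (c n * Kn n^2 + εn n) := by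
        gcongr 2 * ?_
        exact ENNReal.tsum_le_tsum hbound
    _ = 2 * (S + ε/2) := by rw [ENNReal.tsum_add, hεnsum, hS]
    _ = 2 * S + 2 * (ε/2) := by ring
    _ = 2 * S + ε := by rw [ENNReal.mul_div_cancel two_ne_zero ENNReal.ofNat_ne_top]

/-- Lemma A.1 (quantitative content): the weighted K-functional of the
coefficient sequence `b` is controlled, in `L²((0,∞), t^{2θ-3}dt)`, by the
weighted sum of the componentwise K-functionals. All infima, sums and
(lower Lebesgue) integrals are in `ℝ≥0∞`. -/
theorem stmt_1 {E F : Type*} [NormedAddCommGroup E] [InnerProductSpace ℝ E] [CompleteSpace E]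
    [NormedAddCommGroup F] [Module ℝ F]
    (ι : F →ₗ[ℝ] E) (hι : Function.Injective ι)
    (lam : ℕ → ℝ) (hlam : ∀ n, 0 < lam n) (b : ℕ → E)
    (θ : ℝ) (hθ : θ ∈ Set.Ioo (0:ℝ) 1) :
    (∫⁻ t in Set.Ioi (0:ℝ),
        ENNReal.ofReal (t ^ (2*θ - 3)) *
          (⨅ (v₀ : ℕ → E) (v₁ : ℕ → F) (_ : ∀ n, v₀ n + ι (v₁ n) = b n),
            ((∑' n, ENNReal.ofReal (lam n) * (‖v₀ n‖₊ : ℝ≥0∞) ^ 2) ^ (1/2 : ℝ) +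
              ENNReal.ofReal t *
                (∑' n, ENNReal.ofReal (lam n) * (‖v₁ n‖₊ : ℝ≥0∞) ^ 2) ^ (1/2 : ℝ))) ^ 2)
      ≤ 2 * ∑' n, ENNReal.ofReal (lam n) *
          ∫⁻ t in Set.Ioi (0:ℝ),
            ENNReal.ofReal (t ^ (2*θ - 3)) *
              (⨅ (v₀ : E) (v₁ : F) (_ : v₀ + ι v₁ = b n),
                ((‖v₀‖₊ : ℝ≥0∞) + ENNReal.ofReal t * (‖v₁‖₊ : ℝ≥0∞))) ^ 2 := by
  set c : ℕ → ℝ≥0∞ := fun n => ENNReal.ofReal (lam n) with hc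
  set w : ℝ → ℝ≥0∞ := fun t => ENNReal.ofReal (t ^ (2*θ - 3)) with hw
  set Kn : ℕ → ℝ → ℝ≥0∞ := fun n t =>
    ⨅ (v₀ : E) (v₁ : F) (_ : v₀ + ι v₁ = b n),
      ((‖v₀‖₊ : ℝ≥0∞) + ENNReal.ofReal t * (‖v₁‖₊ : ℝ≥0∞)) with hKn
  have hwm : Measurable w := by
    exact (measurable_id.pow_const _).ennreal_ofReal
  have hKnm : ∀ n, Measurable (Kn n) := by
    intro n
    have : Monotone (Kn n) := by
      intro s t hst
      exact iInf_mono fun v₀ => iInf_mono fun v₁ => iInf_mono' fun h =>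
        ⟨h, add_le_add_right (mul_le_mul_left (ENNReal.ofReal_le_ofReal hst) _) _⟩
    exact this.measurable
  calc (∫⁻ t in Set.Ioi (0:ℝ), w t *
          (⨅ (v₀ : ℕ → E) (v₁ : ℕ → F) (_ : ∀ n, v₀ n + ι (v₁ n) = b n),
            ((∑' n, c n * (‖v₀ n‖₊ : ℝ≥0∞) ^ 2) ^ (1/2 : ℝ) +
              ENNReal.ofReal t *
                (∑' n, c n * (‖v₁ n‖₊ : ℝ≥0∞) ^ 2) ^ (1/2 : ℝ))) ^ 2)
      ≤ ∫⁻ t in Set.Ioi (0:ℝ), w t * (2 * ∑' n, c n * Kn n t ^ 2) := by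
        refine MeasureTheory.lintegral_mono fun t => ?_
        exact mul_le_mul_right
          (aux_pointwise ι c (fun n => ENNReal.ofReal_ne_top) b
            (ENNReal.ofReal t) ENNReal.ofReal_ne_top) _
    _ = ∫⁻ t in Set.Ioi (0:ℝ), ∑' n, (2 * c n) * (w t * Kn n t ^ 2) := by
        refine MeasureTheory.lintegral_congr fun t => ?_
        have hmul : ∀ (a : ℝ≥0∞) (f : ℕ → ℝ≥0∞), a * ∑' n, f n = ∑' n, a * f n :=
          fun a f => (ENNReal.tsum_mul_left).symm
        rw [hmul 2, hmul (w t)]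
        exact tsum_congr fun n => by ring
    _ = ∑' n, ∫⁻ t in Set.Ioi (0:ℝ), (2 * c n) * (w t * Kn n t ^ 2) := by
        refine MeasureTheory.lintegral_tsum fun n => ?_
        exact (((hwm.mul ((hKnm n).pow_const 2))).const_mul _).aemeasurable
    _ = ∑' n, (2 * c n) * ∫⁻ t in Set.Ioi (0:ℝ), w t * Kn n t ^ 2 := by
        refine tsum_congr fun n => ?_
        exact MeasureTheory.lintegral_const_mul' _ _
          (ENNReal.mul_ne_top ENNReal.ofNat_ne_top ENNReal.ofReal_ne_top)
    _ = 2 * ∑' n, c n * ∫⁻ t in Set.Ioi (0:ℝ), w t * Kn n t ^ 2 := by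
        rw [← ENNReal.tsum_mul_left]
        exact tsum_congr fun n => by ring
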